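/- For all integers m ≥ 1 and n ≥ 1 there exist a schema R, a conjunctive query q over R with |body(q)| = n, and a linear set Σ of TGDs over R such that every UCQ-rewriting Q of q w.r.t. Σ contains at least m^n conjunctive queries. Concretely, take R = {p_0,…,p_m} with each p_i unary (plus a 0-ary head predicate p), q : p ← p_0(A_1),…,p_0(A_n) with A_1,…,A_n pairwise distinct variables, and Σ = {p_i(X) → p_0(X) : 1 ≤ i ≤ m}; then every UCQ-rewriting of q w.r.t. Σ must contain, for each tuple (i_1,…,i_n) ∈ {1,…,m}^n, a CQ whose body is {p_{i_1}(A_1),…,p_{i_n}(A_n)}, hence has size at least m^n. -/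

import Mathlib

namespace OntDB

/-- Terms: constants, labeled nulls, and variables (each indexed by naturals). -/
inductive Term : Type
  | const : ℕ → Term
  | null  : ℕ → Term
  | var   : ℕ → Term
deriving DecidableEq

/-- a term is not a labeled null -/
def Term.noNull : Term → Prop
  | .null _ => False
  | _ => True

/-- Atoms: a predicate symbol applied to a list of argument terms. -/
structure Atom : Type where
  pred : ℕ
  args : List Term
deriving DecidableEq

/-- A relational schema: a finite set of predicate symbols, each with an arity. -/
structure Schema : Type where
  preds : Finset ℕ
  ar : ℕ → ℕ

/-- arity(R) : the maximum arity over the predicates of R -/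
def Schema.maxArity (R : Schema) : ℕ := R.preds.sup R.ar

def Atom.overSchema (R : Schema) (a : Atom) : Prop :=
  a.pred ∈ R.preds ∧ a.args.length = R.ar a.pred

/-- applying a substitution to an atom -/
def Atom.subst (h : Term → Term) (a : Atom) : Atom := ⟨a.pred, a.args.map h⟩

/-- a substitution fixes every constant -/
def constFix (h : Term → Term) : Prop := ∀ c, h (Term.const c) = Term.const c

/-- A homomorphism from the set of atoms `A` to the set of atoms `A'`. -/
def IsHom (h : Term → Term) (A A' : Set Atom) : Prop :=
  constFix h ∧ ∀ a ∈ A, a.subst h ∈ A'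

/-- the variables occurring in an atom -/
def Atom.vars (a : Atom) : Finset ℕ :=
  (a.args.filterMap (fun t => match t with | .var v => some v | _ => none)).toFinset

/-- the number of occurrences of the variable `v` in the atom `a` -/
def Atom.countVar (a : Atom) (v : ℕ) : ℕ := a.args.count (Term.var v)

/-- the variables occurring in a finite set of atoms -/
def varsOfSet (S : Finset Atom) : Finset ℕ := S.sup Atom.vars

/-- A conjunctive query: a head atom together with a finite set of body atoms. -/
structure CQ : Type where
  head : Atom
  body : Finset Atom
deriving DecidableEq

/-- the variables occurring in a CQ (head and body) -/
def CQ.vars (q : CQ) : Finset ℕ := q.head.vars ∪ varsOfSet q.body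

/-- the number of occurrences of the variable `v` in the CQ `q` (head and body) -/
def CQ.countVar (q : CQ) (v : ℕ) : ℕ := q.head.countVar v + ∑ a ∈ q.body, a.countVar v

/-- a variable is shared in `q` if it occurs more than once in `q` -/
def CQ.shared (q : CQ) (v : ℕ) : Prop := 2 ≤ q.countVar v

/-- a CQ over a schema: body atoms over the schema, and no labeled nulls occur -/
def CQ.overSchema (R : Schema) (q : CQ) : Prop :=
  (∀ a ∈ q.body, a.overSchema R ∧ ∀ t ∈ a.args, t.noNull) ∧ ∀ t ∈ q.head.args, t.noNull

/-- a tuple of constants -/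
def isConstTuple (t : List Term) : Prop := ∀ s ∈ t, ∃ c, s = Term.const c

/-- Evaluation of a CQ over an instance: the tuples of constants obtained as images
of the distinguished terms under homomorphisms of the body into the instance. -/
def CQ.eval (q : CQ) (I : Set Atom) : Set (List Term) :=
  { t | isConstTuple t ∧ ∃ h : Term → Term, IsHom h ↑q.body I ∧ q.head.args.map h = t }

/-- evaluation of a (possibly infinite) union of CQs -/
def ucqEval (Q : Set CQ) (I : Set Atom) : Set (List Term) := ⋃ q ∈ Q, q.eval I

/-- A TGD (in normal form representation): a finite set of body atoms plus a single
head atom; the existentially quantified variables are exactly the head variables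
that do not occur in the body. -/
structure TGD : Type where
  body : Finset Atom
  head : Atom
deriving DecidableEq

/-- the universally quantified variables occurring in the head -/
def TGD.frontier (σ : TGD) : Finset ℕ := varsOfSet σ.body ∩ σ.head.vars

/-- the existentially quantified variables -/
def TGD.exVars (σ : TGD) : Finset ℕ := σ.head.vars \ varsOfSet σ.body

def TGD.vars (σ : TGD) : Finset ℕ := varsOfSet σ.body ∪ σ.head.vars

/-- normal form: at most one existentially quantified variable, occurring once -/
def TGD.NormalForm (σ : TGD) : Prop :=
  σ.exVars.card ≤ 1 ∧ ∀ v ∈ σ.exVars, σ.head.countVar v = 1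

/-- a TGD is linear if its body consists of a single atom -/
def TGD.Linear (σ : TGD) : Prop := σ.body.card = 1

/-- a set of TGDs is linear if all its members are -/
def LinearSet (Sig : Finset TGD) : Prop := ∀ σ ∈ Sig, σ.Linear

def TGD.overSchema (R : Schema) (σ : TGD) : Prop :=
  σ.body.Nonempty ∧ (∀ a ∈ σ.body, a.overSchema R ∧ ∀ t ∈ a.args, t.noNull) ∧
  σ.head.overSchema R ∧ ∀ t ∈ σ.head.args, t.noNull

/-- satisfaction of a TGD by an instance -/
def TGD.sat (σ : TGD) (I : Set Atom) : Prop :=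
  ∀ h : Term → Term, IsHom h ↑σ.body I →
    ∃ h' : Term → Term, constFix h' ∧
      (∀ v ∈ σ.frontier, h' (Term.var v) = h (Term.var v)) ∧ σ.head.subst h' ∈ I

/-- satisfaction of a set of TGDs -/
def satSet (Sig : Finset TGD) (I : Set Atom) : Prop := ∀ σ ∈ Sig, σ.sat I

/-- a database for a schema: a finite set of atoms over the schema whose
arguments are constants -/
def IsDatabase (R : Schema) (D : Finset Atom) : Prop :=
  ∀ a ∈ D, a.overSchema R ∧ ∀ t ∈ a.args, ∃ c, t = Term.const c

/-- the certain answers of a CQ w.r.t. a database and a set of TGDs -/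
def certAns (q : CQ) (D : Finset Atom) (Sig : Finset TGD) : Set (List Term) :=
  { t | ∀ I : Set Atom, ↑D ⊆ I → satSet Sig I → t ∈ q.eval I }

/-- the certain answers of a (possibly infinite) union of CQs -/
def certAnsUCQ (Q : Set CQ) (D : Finset Atom) (Sig : Finset TGD) : Set (List Term) :=
  { t | ∀ I : Set Atom, ↑D ⊆ I → satSet Sig I → t ∈ ucqEval Q I }

/-- a unifier for a finite set of atoms -/
def IsUnifier (γ : Term → Term) (S : Finset Atom) : Prop :=
  constFix γ ∧ ∀ a ∈ S, ∀ b ∈ S, a.subst γ = b.subst γ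

def Unifies (S : Finset Atom) : Prop := ∃ γ, IsUnifier γ S

/-- most general unifier -/
def IsMGU (γ : Term → Term) (S : Finset Atom) : Prop :=
  IsUnifier γ S ∧ ∀ γ', IsUnifier γ' S → ∃ δ : Term → Term, ∀ t, γ' t = δ (γ t)

/-- `i` is the position of the existentially quantified variable in head(σ) -/
def TGD.exPos (σ : TGD) (i : ℕ) : Prop :=
  ∃ z ∈ σ.exVars, σ.head.args[i]? = some (Term.var z)

/-- applicability of the TGD σ to the set S ⊆ body(q) -/
def Applicable (q : CQ) (σ : TGD) (S : Finset Atom) : Prop :=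
  S.Nonempty ∧ S ⊆ q.body ∧ Unifies (S ∪ {σ.head}) ∧
  ∀ a ∈ S, ∀ i, σ.exPos i →
    (∀ c, a.args[i]? ≠ some (Term.const c)) ∧
    ∀ v, a.args[i]? = some (Term.var v) → ¬ q.shared v

/-- factorizability of the set S ⊆ body(q) w.r.t. the TGD σ -/
def Factorizable (q : CQ) (σ : TGD) (S : Finset Atom) : Prop :=
  S ⊆ q.body ∧ 2 ≤ S.card ∧ Unifies S ∧ (∃ i, σ.exPos i) ∧
  ∃ V : ℕ, V ∉ varsOfSet (q.body \ S) ∧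
    ∀ a ∈ S, (∃ i, σ.exPos i ∧ a.args[i]? = some (Term.var V)) ∧
      ∀ j, a.args[j]? = some (Term.var V) → σ.exPos j

/-- renaming of variables -/
def renT (ρ : ℕ → ℕ) : Term → Term
  | .var v => .var (ρ v)
  | t => t

/-- renaming the variables of a TGD -/
def TGD.rename (σ : TGD) (ρ : ℕ → ℕ) : TGD :=
  ⟨σ.body.image (Atom.subst (renT ρ)), σ.head.subst (renT ρ)⟩

/-- applying a substitution to a CQ -/
def CQ.subst (q : CQ) (γ : Term → Term) : CQ :=
  ⟨q.head.subst γ, q.body.image (Atom.subst γ)⟩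

/-- the restriction on MGUs used by XRewrite under sticky sets of TGDs:
every variable of the protected set `W` (the variables of the input query) is
mapped to a variable of `W` (or to a constant).  For `W = ∅` no restriction. -/
def ProtectsVars (W : Finset ℕ) (γ : Term → Term) : Prop :=
  ∀ v ∈ W, (∃ u ∈ W, γ (Term.var v) = Term.var u) ∨ ∃ c, γ (Term.var v) = Term.const c

/-- the substitution is the identity on all variables outside `V` -/
def IdOutside (V : Finset ℕ) (γ : Term → Term) : Prop :=
  ∀ v, v ∉ V → γ (Term.var v) = Term.var v

/-- one rewriting step of XRewrite (applied to `q`, producing `q'`) -/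
def IsRewriteStep (Sig : Finset TGD) (W : Finset ℕ) (q q' : CQ) : Prop :=
  ∃ σ ∈ Sig, ∃ ρ : ℕ → ℕ, Function.Injective ρ ∧ (∀ v, ρ v ∉ q.vars) ∧
    ∃ S : Finset Atom, Applicable q (σ.rename ρ) S ∧
      ∃ γ : Term → Term, IsMGU γ (S ∪ {(σ.rename ρ).head}) ∧
        IdOutside (varsOfSet (S ∪ {(σ.rename ρ).head})) γ ∧ ProtectsVars W γ ∧
        q' = (CQ.mk q.head ((q.body \ S) ∪ (σ.rename ρ).body)).subst γ

/-- one factorization step of XRewrite -/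
def IsFactStep (Sig : Finset TGD) (W : Finset ℕ) (q q' : CQ) : Prop :=
  ∃ σ ∈ Sig, ∃ S : Finset Atom, Factorizable q σ S ∧
    ∃ γ : Term → Term, IsMGU γ S ∧ IdOutside (varsOfSet S) γ ∧ ProtectsVars W γ ∧
      q' = q.subst γ

/-- the CQs obtainable from q by a finite sequence of rewriting and
factorization steps -/
inductive Reach (Sig : Finset TGD) (W : Finset ℕ) (q : CQ) : CQ → Prop
  | refl : Reach Sig W q q
  | rw {p p' : CQ} : Reach Sig W q p → IsRewriteStep Sig W p p' → Reach Sig W q p'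
  | fact {p p' : CQ} : Reach Sig W q p → IsFactStep Sig W p p' → Reach Sig W q p'

/-- the output of XRewrite(q,Σ): q together with all CQs obtainable from q by a
finite sequence of rewriting and factorization steps whose last step is a
rewriting step -/
def XRewriteOut (Sig : Finset TGD) (W : Finset ℕ) (q : CQ) : Set CQ :=
  {q} ∪ { p' | ∃ p : CQ, Reach Sig W q p ∧ IsRewriteStep Sig W p p' }

/-- two CQs are the same up to bijective variable renaming -/
def CQEquiv (p p' : CQ) : Prop :=
  ∃ ρ : ℕ → ℕ, Function.Bijective ρ ∧ p.subst (renT ρ) = p'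

/-- the SMarking procedure: `Marked Sig σ v` says that the body variable `v` of
σ gets marked -/
inductive Marked (Sig : Finset TGD) : TGD → ℕ → Prop
  | init {σ : TGD} {v : ℕ} : σ ∈ Sig → v ∈ varsOfSet σ.body → v ∉ σ.head.vars →
      Marked Sig σ v
  | prop {σ σ' : TGD} {v : ℕ} (b : Atom) (u : ℕ → ℕ) : σ ∈ Sig → σ' ∈ Sig →
      v ∈ varsOfSet σ.body → v ∈ σ.head.vars → b ∈ σ'.body →
      (∀ i : ℕ, σ.head.args[i]? = some (Term.var v) →
        b.args[i]? = some (Term.var (u i))) →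
      (∀ i : ℕ, σ.head.args[i]? = some (Term.var v) → Marked Sig σ' (u i)) →
      Marked Sig σ v

/-- a set of TGDs is sticky if every marked variable occurs only once in the
body of its TGD -/
def Sticky (Sig : Finset TGD) : Prop :=
  ∀ σ ∈ Sig, ∀ v : ℕ, Marked Sig σ v → (∑ a ∈ σ.body, a.countVar v) = 1

/- ## Propagation graph and atom coverage -/

/-- a position of a schema: a predicate together with an argument index -/
abbrev Pos := ℕ × ℕ

/-- the edges of the propagation graph -/
def PGEdge (σ : TGD) (pb ph : Pos) : Prop :=
  ∃ b ∈ σ.body, ∃ v : ℕ,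
    b.pred = pb.1 ∧ b.args[pb.2]? = some (Term.var v) ∧
    σ.head.pred = ph.1 ∧ σ.head.args[ph.2]? = some (Term.var v)

/-- `vs` is a path in the propagation graph of Σ with edge labels `ls` -/
def IsPath (Sig : Finset TGD) (vs : List Pos) (ls : List TGD) : Prop :=
  vs.length = ls.length + 1 ∧
  ∀ j < ls.length, ∃ σ pb ph,
    ls[j]? = some σ ∧ vs[j]? = some pb ∧ vs[j + 1]? = some ph ∧ σ ∈ Sig ∧ PGEdge σ pb ph

/-- a minimal path: no cycle is traversed twice consecutively -/
def MinimalPath (Sig : Finset TGD) (vs : List Pos) (ls : List TGD) : Prop :=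
  IsPath Sig vs ls ∧
  ¬ ∃ i j : ℕ, 0 < i ∧ i + 1 < vs.length ∧ 0 < j ∧ j ≤ i ∧ i + j < vs.length ∧
      (∀ k ≤ j, vs[i - j + k]? = vs[i + k]?) ∧ ∀ k < j, ls[i - j + k]? = ls[i + k]?

/-- a tight sequence of (linear) TGDs -/
def TightSeq (σs : List TGD) : Prop :=
  ∀ j, j + 1 < σs.length →
    ∃ σ1 σ2, σs[j]? = some σ1 ∧ σs[j + 1]? = some σ2 ∧
      ∃ h : Term → Term, constFix h ∧ σ2.body.image (Atom.subst h) = {σ1.head}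

/-- a sequence of TGDs compatible to an atom -/
def CompatibleTo (σs : List TGD) (a : Atom) : Prop :=
  ∃ σ1, σs[0]? = some σ1 ∧ ∃ h : Term → Term, constFix h ∧
    σ1.body.image (Atom.subst h) = {a}

/-- pos(a,t): the positions (indices) at which the term t occurs in the atom a -/
def atomPos (a : Atom) (t : Term) : Set ℕ := { i | a.args[i]? = some t }

/-- T(q,a): the constants of a together with the variables of a shared in q -/
def Tq (q : CQ) (a : Atom) : Set Term :=
  { t | t ∈ a.args ∧ ((∃ c, t = Term.const c) ∨ ∃ v, t = Term.var v ∧ q.shared v) }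

/-- atom coverage: a covers b w.r.t. q and Σ -/
def Covers (Sig : Finset TGD) (q : CQ) (a b : Atom) : Prop :=
  (∀ t ∈ Tq q b, t ∈ a.args) ∧
  ∃ σs : List TGD, σs ≠ [] ∧ (∀ σ ∈ σs, σ ∈ Sig) ∧ TightSeq σs ∧ CompatibleTo σs a ∧
    ∀ t ∈ Tq q b, ∀ i ∈ atomPos b t,
      ∃ vs : List Pos, MinimalPath Sig vs σs ∧
        (∃ p0 : Pos, vs[0]? = some p0 ∧ p0.1 = a.pred ∧ p0.2 ∈ atomPos a t) ∧
        vs[vs.length - 1]? = some (b.pred, i)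


/- ### Auxiliary material for the lower bound -/

/-- the schema: unary predicates `0,…,m` and a 0-ary predicate `m+1` -/
def lbR (m : ℕ) : Schema := ⟨Finset.range (m+2), fun i => if i = m+1 then 0 else 1⟩

/-- the query `p ← p₀(c₀),…,p₀(c_{n-1})` with head the 0-ary predicate `m+1` -/
def lbQ (m n : ℕ) : CQ :=
  ⟨⟨m+1, []⟩, (Finset.range n).image (fun j => ⟨0, [Term.const j]⟩)⟩

/-- the TGD `p_{i+1}(X) → p₀(X)` -/
def lbTGD (i : ℕ) : TGD := ⟨{⟨i+1, [Term.var 0]⟩}, ⟨0, [Term.var 0]⟩⟩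

/-- the set of TGDs `{p_{i}(X) → p₀(X) : 1 ≤ i ≤ m}` -/
def lbSig (m : ℕ) : Finset TGD := (Finset.range m).image lbTGD

/-- the database `{p_{f(j)+1}(c_j) : j < n}` -/
def lbD (m n : ℕ) (f : Fin n → Fin m) : Finset Atom :=
  Finset.univ.image (fun j : Fin n => ⟨(f j : ℕ) + 1, [Term.const (j : ℕ)]⟩)

lemma lbA (m n : ℕ) (f : Fin n → Fin m) :
    ([] : List Term) ∈ certAns (lbQ m n) (lbD m n f) (lbSig m) := by
  intro I hDI hsat
  have hp0 : ∀ j : ℕ, j < n → (⟨0, [Term.const j]⟩ : Atom) ∈ I := by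
    intro j hj
    have hmem : (⟨(f ⟨j, hj⟩ : ℕ)+1, [Term.const j]⟩ : Atom) ∈ I := by
      apply hDI
      simp only [Finset.coe_image, Set.mem_image, Finset.mem_coe, lbD]
      exact ⟨⟨j, hj⟩, by simp, rfl⟩
    have hσ : lbTGD (f ⟨j, hj⟩ : ℕ) ∈ lbSig m := by
      simp only [lbSig, Finset.mem_image]
      exact ⟨(f ⟨j, hj⟩ : ℕ), by simp [(f ⟨j, hj⟩).isLt], rfl⟩
    have hs := hsat _ hσ
    set h : Term → Term := fun t => if t = Term.var 0 then Term.const j else t with hh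
    have hhom : IsHom h ↑(lbTGD (f ⟨j, hj⟩ : ℕ)).body I := by
      constructor
      · intro c; simp [hh]
      · intro a ha
        simp only [lbTGD, Finset.coe_singleton, Set.mem_singleton_iff] at ha
        subst ha
        simpa [Atom.subst, hh] using hmem
    obtain ⟨h', hcf, hfr, hhd⟩ := hs h hhom
    have h0fr : 0 ∈ (lbTGD (f ⟨j, hj⟩ : ℕ)).frontier := by
      simp [lbTGD, TGD.frontier, varsOfSet, Atom.vars]
    have hv : h' (Term.var 0) = Term.const j := by
      rw [hfr 0 h0fr]; simp [hh]
    simpa [lbTGD, Atom.subst, hv] using hhd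
  refine ⟨by intro s hs; simp at hs, id, ⟨fun c => rfl, ?_⟩, rfl⟩
  intro a ha
  simp only [lbQ, Finset.coe_image, Set.mem_image, Finset.mem_coe,
    Finset.mem_range] at ha
  obtain ⟨j, hj, rfl⟩ := ha
  simpa [Atom.subst] using hp0 j hj

lemma lbB (m n : ℕ) (Q : Finset CQ)
    (H : ∀ D : Finset Atom, IsDatabase (lbR m) D →
      ucqEval ↑Q ↑D = certAns (lbQ m n) D (lbSig m))
    (f : Fin n → Fin m) :
    ∃ p, p ∈ Q ∧ (∀ j : Fin n, (⟨(f j : ℕ)+1, [Term.const (j : ℕ)]⟩ : Atom) ∈ p.body) ∧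
      ∀ b ∈ p.body, ∀ j : Fin n, b.args = [Term.const (j : ℕ)] →
        b.pred = (f j : ℕ)+1 := by
  -- the database D_f
  have hDdb : IsDatabase (lbR m) (lbD m n f) := by
    intro a ha
    simp only [lbD, Finset.mem_image, Finset.mem_univ, true_and] at ha
    obtain ⟨j, rfl⟩ := ha
    refine ⟨⟨?_, ?_⟩, ?_⟩
    · simp only [lbR, Finset.mem_range]; have := (f j).isLt; omega
    · have hne : (f j : ℕ)+1 ≠ m+1 := by have := (f j).isLt; omega
      simp [lbR, hne]; omega
    · intro t ht
      simp only [List.mem_singleton] at ht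
      exact ⟨_, ht⟩
  -- completeness at D_f gives a CQ p ∈ Q matching D_f
  have hmem0 : ([] : List Term) ∈ ucqEval ↑Q ↑(lbD m n f) := by
    rw [H _ hDdb]; exact lbA m n f
  simp only [ucqEval, Set.mem_iUnion, exists_prop, Finset.mem_coe] at hmem0
  obtain ⟨p, hpQ, hpev⟩ := hmem0
  obtain ⟨-, hf, ⟨hcf, hbody⟩, hhd⟩ := hpev
  have hargs0 : p.head.args = [] := by
    cases hargs : p.head.args with
    | nil => rfl
    | cons a l => rw [hargs] at hhd; simp at hhd
  -- structure of the body of p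
  have hstruct : ∀ a ∈ p.body, ∃ j : Fin n, a.pred = (f j : ℕ)+1 ∧
      a.args.map hf = [Term.const (j : ℕ)] := by
    intro a ha
    have h1 := hbody a (Finset.mem_coe.mpr ha)
    simp only [lbD, Finset.coe_image, Set.mem_image, Finset.mem_coe, Finset.mem_univ,
      Finset.coe_univ, Set.mem_univ, true_and, Atom.subst] at h1
    obtain ⟨j, hj⟩ := h1
    obtain ⟨h2, h3⟩ := Atom.mk.injEq _ _ _ _ ▸ hj
    exact ⟨j, h2.symm, h3.symm⟩
  -- ground atoms of the body of p are determined by f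
  have hground : ∀ b ∈ p.body, ∀ j : Fin n, b.args = [Term.const (j : ℕ)] →
      b.pred = (f j : ℕ)+1 := by
    intro b hb j hbargs
    obtain ⟨j', hpred, hmap⟩ := hstruct b hb
    rw [hbargs] at hmap
    simp only [List.map_cons, List.map_nil, hcf (j : ℕ), List.cons.injEq, and_true] at hmap
    have : (j : ℕ) = (j' : ℕ) := Term.const.injEq _ _ ▸ hmap
    rw [hpred, Fin.ext (by omega : (j' : ℕ) = (j : ℕ))]
  -- the test substitution g and database E
  set g : Term → Term := fun t => match t with
    | Term.const c => Term.const c | _ => Term.const n with hg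
  have hgconst : ∀ t, ∃ c, g t = Term.const c := by
    intro t; cases t
    · exact ⟨_, rfl⟩
    · exact ⟨n, rfl⟩
    · exact ⟨n, rfl⟩
  set E : Finset Atom := p.body.image (Atom.subst g) with hE
  have hlen1 : ∀ a ∈ p.body, a.args.length = 1 := by
    intro a ha
    obtain ⟨j, -, hmap⟩ := hstruct a ha
    have := congrArg List.length hmap
    simpa using this
  have hEdb : IsDatabase (lbR m) E := by
    intro b hb
    simp only [hE, Finset.mem_image] at hb
    obtain ⟨a, ha, rfl⟩ := hb
    obtain ⟨j, hpred, -⟩ := hstruct a ha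
    refine ⟨⟨?_, ?_⟩, ?_⟩
    · simp only [Atom.subst, lbR, Finset.mem_range, hpred]
      have := (f j).isLt; omega
    · have hne : (f j : ℕ)+1 ≠ m+1 := by have := (f j).isLt; omega
      simp [Atom.subst, lbR, hpred, hne, hlen1 a ha]; omega
    · intro t ht
      simp only [Atom.subst, List.mem_map] at ht
      obtain ⟨s, -, rfl⟩ := ht
      exact hgconst s
  -- soundness: [] is a certain answer over E
  have hEmem : ([] : List Term) ∈ ucqEval ↑Q ↑E := by
    simp only [ucqEval, Set.mem_iUnion, exists_prop, Finset.mem_coe]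
    refine ⟨p, hpQ, by intro s hs; simp at hs, g, ⟨fun c => rfl, ?_⟩,
      by simp [hargs0]⟩
    intro a ha
    simp only [Finset.mem_coe] at ha ⊢
    exact Finset.mem_image_of_mem _ ha
  rw [H _ hEdb] at hEmem
  -- the canonical model of E
  set I : Set Atom := {b | b ∈ E ∨ ∃ a ∈ E, b = ⟨0, a.args⟩} with hI
  have hsub : ↑E ⊆ I := fun b hb => Or.inl (Finset.mem_coe.mp hb)
  have hsat : satSet (lbSig m) I := by
    intro σ hσ
    simp only [lbSig, Finset.mem_image] at hσ
    obtain ⟨i, -, rfl⟩ := hσ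
    intro h hh
    have hb0 : (⟨i+1, [Term.var 0]⟩ : Atom) ∈ (↑(lbTGD i).body : Set Atom) := by
      simp [lbTGD]
    have h1 := hh.2 _ hb0
    refine ⟨h, hh.1, fun v _ => rfl, ?_⟩
    rcases h1 with h1 | ⟨a, haE, heq⟩
    · exact Or.inr ⟨_, h1, rfl⟩
    · exact absurd (congrArg Atom.pred heq) (by simp [Atom.subst])
  have hqI := hEmem I hsub hsat
  obtain ⟨-, h0, ⟨hcf0, hb0⟩, -⟩ := hqI
  -- the body of p contains all ground atoms of D_f
  have hkey : ∀ j : Fin n, (⟨(f j : ℕ)+1, [Term.const (j : ℕ)]⟩ : Atom) ∈ p.body := by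
    intro j
    have hja : (⟨0, [Term.const (j : ℕ)]⟩ : Atom) ∈ (↑(lbQ m n).body : Set Atom) := by
      simp only [lbQ, Finset.coe_image, Set.mem_image, Finset.mem_coe, Finset.mem_range]
      exact ⟨(j : ℕ), j.isLt, rfl⟩
    have h2 := hb0 _ hja
    rw [show (⟨0, [Term.const (j : ℕ)]⟩ : Atom).subst h0 = ⟨0, [Term.const (j : ℕ)]⟩
      from by simp [Atom.subst, hcf0 (j : ℕ)]] at h2
    rcases h2 with h2 | ⟨a, haE, heq⟩
    · exfalso
      simp only [hE, Finset.mem_image] at h2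
      obtain ⟨a, ha, hEq⟩ := h2
      obtain ⟨j', hpred, -⟩ := hstruct a ha
      have : a.pred = 0 := by
        have := congrArg Atom.pred hEq
        simpa [Atom.subst] using this
      omega
    · have haargs : a.args = [Term.const (j : ℕ)] := (Atom.mk.injEq _ _ _ _ ▸ heq).2.symm
      simp only [hE, Finset.mem_image] at haE
      obtain ⟨b, hbp, rfl⟩ := haE
      obtain ⟨t, hts⟩ := List.length_eq_one_iff.mp (hlen1 b hbp)
      have hgt : g t = Term.const (j : ℕ) := by
        have : (b.args.map g) = [Term.const (j : ℕ)] := by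
          simpa [Atom.subst] using haargs
        rw [hts] at this
        simpa using this
      have htj : t = Term.const (j : ℕ) := by
        cases t with
        | const c => simpa [hg] using hgt
        | null k =>
          exfalso
          have : n = (j : ℕ) := by
            have := hgt; simp only [hg] at this
            exact (Term.const.injEq _ _ ▸ this)
          have := j.isLt; omega
        | var v =>
          exfalso
          have : n = (j : ℕ) := by
            have := hgt; simp only [hg] at this
            exact (Term.const.injEq _ _ ▸ this)
          have := j.isLt; omega
      have hbargs : b.args = [Term.const (j : ℕ)] := by rw [hts, htj]
      have hbpred := hground b hbp j hbargs
      have : b = ⟨(f j : ℕ)+1, [Term.const (j : ℕ)]⟩ := by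
        cases b with
        | mk pr ar => simp only at hbpred hbargs; rw [hbpred, hbargs]
      rwa [this] at hbp
  exact ⟨p, hpQ, hkey, hground⟩

/-- for all m,n ≥ 1 there are a schema, a CQ with n body atoms and
a linear set of TGDs such that every UCQ-rewriting contains at least m^n CQs. -/
theorem linear_rewriting_lower_bound (m n : ℕ) (hm : 1 ≤ m) (hn : 1 ≤ n) :
    ∃ (R : Schema) (q : CQ) (Sig : Finset TGD),
      q.body.card = n ∧ q.overSchema R ∧
      (∀ σ ∈ Sig, σ.overSchema R) ∧ LinearSet Sig ∧
      ∀ Q : Finset CQ,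
        (∀ D : Finset Atom, IsDatabase R D → ucqEval ↑Q ↑D = certAns q D Sig) →
        m ^ n ≤ Q.card := by
  refine ⟨lbR m, lbQ m n, lbSig m, ?_, ?_, ?_, ?_, ?_⟩
  · -- the body has n atoms
    rw [lbQ]
    rw [Finset.card_image_of_injective _ (fun a b h => by simpa using h)]
    exact Finset.card_range n
  · -- q is over the schema
    constructor
    · intro a ha
      simp only [lbQ, Finset.mem_image, Finset.mem_range] at ha
      obtain ⟨j, -, rfl⟩ := ha
      refine ⟨⟨?_, ?_⟩, ?_⟩
      · simp [lbR]
      · simp [lbR]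
      · intro t ht
        simp only [List.mem_singleton] at ht
        subst ht; trivial
    · intro t ht
      simp only [lbQ, List.not_mem_nil] at ht
  · -- the TGDs are over the schema
    intro σ hσ
    simp only [lbSig, Finset.mem_image, Finset.mem_range] at hσ
    obtain ⟨i, hi, rfl⟩ := hσ
    refine ⟨⟨_, Finset.mem_singleton_self _⟩, ?_, ⟨?_, ?_⟩, ?_⟩
    · intro a ha
      simp only [lbTGD, Finset.mem_singleton] at ha
      subst ha
      refine ⟨⟨?_, ?_⟩, ?_⟩
      · simp only [lbR, Finset.mem_range]; omega
      · have hne : i+1 ≠ m+1 := by omega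
        simp [lbR, hne]; omega
      · intro t ht
        simp only [List.mem_singleton] at ht
        subst ht; trivial
    · simp [lbTGD, lbR]
    · simp [lbTGD, lbR]
    · intro t ht
      simp only [lbTGD, List.mem_singleton] at ht
      subst ht; trivial
  · -- the TGDs are linear
    intro σ hσ
    simp only [lbSig, Finset.mem_image, Finset.mem_range] at hσ
    obtain ⟨i, -, rfl⟩ := hσ
    simp [TGD.Linear, lbTGD]
  · -- the lower bound
    intro Q H
    choose φ hφQ hφmem hφpred using lbB m n Q H
    have hinj : Function.Injective φ := by
      intro f g hfg
      funext j
      have h1 := hφmem g j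
      rw [← hfg] at h1
      have h2 := hφpred f _ h1 j rfl
      simp only at h2
      exact Fin.ext (by omega)
    calc m ^ n = Fintype.card (Fin n → Fin m) := by simp
      _ ≤ Fintype.card {x // x ∈ Q} :=
          Fintype.card_le_of_injective (fun f => ⟨φ f, hφQ f⟩)
            (fun f g h => hinj (congrArg Subtype.val h))
      _ = Q.card := Fintype.card_coe Q

end OntDB
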